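/- For P ⊆ {1,…,n−1} let 𝓑_P = {σ_v·σ_w : v ∈ W^P, w ∈ W_P} denote the set of pointwise products of Schubert classes, regarded as a set of functions W → R. If P, Q ⊆ {1,…,n−1} are distinct subsets and it is not the case that {P, Q} = {∅, {1,…,n−1}}, then 𝓑_P ≠ 𝓑_Q. -/

import Mathlib

noncomputable section

open MvPolynomial
open scoped Classical

/-- The polynomial ring `R = ℂ[x₁, …, xₙ]`. -/
abbrev BilleyR (n : ℕ) := MvPolynomial (Fin n) ℂ

/-- The simple transposition `sᵢ = (i, i+1)` in the symmetric group on `{1, …, n}`. -/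
def sTr (n : ℕ) (i : Fin (n - 1)) : Equiv.Perm (Fin n) :=
  Equiv.swap ⟨i.1, by have := i.isLt; omega⟩ ⟨i.1 + 1, by have := i.isLt; omega⟩

/-- The length `ℓ(w)`: the minimal `k` such that `w` is a product of `k` simple
transpositions. -/
def len (n : ℕ) (w : Equiv.Perm (Fin n)) : ℕ :=
  sInf {k | ∃ l : List (Fin (n - 1)), l.length = k ∧ (l.map (sTr n)).prod = w}

/-- `l` is a reduced word for `w`: the product of the corresponding simple transpositions
is `w` and the length of `l` is `ℓ(w)`. -/
def IsRedWord (n : ℕ) (l : List (Fin (n - 1))) (w : Equiv.Perm (Fin n)) : Prop :=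
  (l.map (sTr n)).prod = w ∧ l.length = len n w

/-- The simple root `αᵢ = xᵢ - x_{i+1}`. -/
def alphaR (n : ℕ) (i : Fin (n - 1)) : BilleyR n :=
  X ⟨i.1, by have := i.isLt; omega⟩ - X ⟨i.1 + 1, by have := i.isLt; omega⟩

/-- Given a word `b = (b₁, …, b_m)`, the polynomial
`r(j, u) = (s_{b₁} ⋯ s_{b_{j-1}})(α_{b_j})` (with `j` zero-indexed here). -/
def rPoly (n : ℕ) (b : List (Fin (n - 1))) (j : Fin b.length) : BilleyR n :=
  rename (⇑(((b.take j.1).map (sTr n)).prod)) (alphaR n (b.get j))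

/-- Billey's formula with respect to the word `b` for `u`:
`σ_v(u) = Σ ∏ₜ r(jₜ, u)`, summed over all strictly increasing index sequences
`j₁ < ⋯ < j_{ℓ(v)}` into `b` such that `s_{b_{j₁}} ⋯ s_{b_{j_{ℓ(v)}}} = v`. -/
def billeyWord (n : ℕ) (b : List (Fin (n - 1))) (v : Equiv.Perm (Fin n)) : BilleyR n :=
  ∑ J ∈ Finset.univ.filter (fun J : Finset (Fin b.length) =>
      J.card = len n v ∧
        ((J.sort (· ≤ ·)).map (fun j => sTr n (b.get j))).prod = v),
    ∏ j ∈ J, rPoly n b j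

/-- The Billey polynomial `σ_v(u)`, computed from a choice of reduced word for `u`
(its value is independent of this choice). -/
def sigma (n : ℕ) (v u : Equiv.Perm (Fin n)) : BilleyR n :=
  if h : ∃ b : List (Fin (n - 1)), IsRedWord n b u then billeyWord n h.choose v else 0

/-- The standard parabolic subgroup `W_P` generated by `{sᵢ : i ∈ P}`. -/
def WPar (n : ℕ) (P : Set (Fin (n - 1))) : Subgroup (Equiv.Perm (Fin n)) :=
  Subgroup.closure (sTr n '' P)

/-- The set `W^P` of minimal-length coset representatives of `W / W_P`. -/
def minReps (n : ℕ) (P : Set (Fin (n - 1))) : Set (Equiv.Perm (Fin n)) :=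
  {v | ∀ u ∈ WPar n P, len n v ≤ len n (v * u)}

/-- The parabolic family `𝓑_P = {σ_v·σ_w : v ∈ W^P, w ∈ W_P}` of pointwise products of
Schubert classes, as a set of functions `W → R`. -/
def parabolicBasis (n : ℕ) (P : Set (Fin (n - 1))) : Set (Equiv.Perm (Fin n) → BilleyR n) :=
  {f | ∃ v ∈ minReps n P, ∃ w ∈ WPar n P, f = fun u => sigma n v u * sigma n w u}

namespace BA
variable {n : ℕ}

lemma sTr_apply_val (i : Fin (n-1)) (x : Fin n) :
    ((sTr n i) x).1 = if x.1 = i.1 then i.1 + 1 else if x.1 = i.1 + 1 then i.1 else x.1 := by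
  unfold sTr
  rw [Equiv.swap_apply_def]
  split_ifs with h1 h2 h3 h4 h5 <;>
    simp_all [Fin.ext_iff] <;> omega

lemma sTr_rel (i : Fin (n-1)) (x : Fin n) :
    (x.1 = i.1 ∧ ((sTr n i) x).1 = i.1 + 1) ∨ (x.1 = i.1 + 1 ∧ ((sTr n i) x).1 = i.1) ∨
      (x.1 ≠ i.1 ∧ x.1 ≠ i.1 + 1 ∧ ((sTr n i) x).1 = x.1) := by
  have := sTr_apply_val i x
  split_ifs at this <;> tauto

lemma sTr_sTr (i : Fin (n-1)) (x : Fin n) : sTr n i (sTr n i x) = x := Equiv.swap_apply_self _ _ x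

lemma sTr_mul_self (i : Fin (n-1)) : sTr n i * sTr n i = 1 := by
  unfold sTr; exact Equiv.swap_mul_self _ _

lemma sTr_inv (i : Fin (n-1)) : (sTr n i)⁻¹ = sTr n i := by
  unfold sTr; exact Equiv.swap_inv _ _

lemma sTr_ne_one (i : Fin (n-1)) : sTr n i ≠ 1 := by
  intro h
  have := congrArg Fin.val (congrFun (congrArg (fun (e : Equiv.Perm (Fin n)) => (e : Fin n → Fin n)) h) ⟨i.1, by have := i.isLt; omega⟩)
  rw [sTr_apply_val] at this
  simp at this

lemma sTr_injective : Function.Injective (sTr n) := by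
  intro i j h
  have := congrArg Fin.val (congrFun (congrArg (fun (e : Equiv.Perm (Fin n)) => (e : Fin n → Fin n)) h) ⟨i.1, by have := i.isLt; omega⟩)
  rw [sTr_apply_val, sTr_apply_val] at this
  have hi := i.isLt; have hj := j.isLt
  apply Fin.ext
  simp only [Fin.val_mk] at this
  split_ifs at this <;> omega

lemma sign_sTr (i : Fin (n-1)) : Equiv.Perm.sign (sTr n i) = -1 := by
  unfold sTr; exact Equiv.Perm.sign_swap (by simp [Fin.ext_iff])

lemma sign_word (l : List (Fin (n-1))) :
    Equiv.Perm.sign ((l.map (sTr n)).prod) = (-1) ^ l.length := by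
  induction l with
  | nil => simp
  | cons c l ih => simp [pow_succ, ih, sign_sTr, mul_comm]

/-- swap of any two points is a product of adjacent transpositions -/
lemma swap_word_aux : ∀ (d : ℕ) (x y : Fin n), x.1 ≤ y.1 → y.1 - x.1 ≤ d →
    ∃ l : List (Fin (n-1)), (l.map (sTr n)).prod = Equiv.swap x y := by
  intro d
  induction d with
  | zero =>
    intro x y h1 h2
    have : x = y := Fin.ext (by omega)
    subst this
    exact ⟨[], by simp [Equiv.swap_self]; rfl⟩
  | succ d ih =>
    intro x y h1 h2
    rcases Nat.lt_or_ge (y.1 - x.1) (d+1) with h | h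
    · exact ih x y h1 (by omega)
    · -- y.1 - x.1 = d+1 ≥ 1
      have hy1 : 1 ≤ y.1 := by omega
      have hyn : y.1 < n := y.isLt
      have hc1 : y.1 - 1 < n - 1 := by omega
      have hy'1 : y.1 - 1 < n := by omega
      let c : Fin (n-1) := ⟨y.1 - 1, hc1⟩
      let y' : Fin n := ⟨y.1 - 1, hy'1⟩
      have hst : sTr n c = Equiv.swap y' y := by
        unfold sTr
        congr 1 <;> apply Fin.ext <;> simp [c, y'] <;> omega
      rcases eq_or_ne x y' with rfl | hxy'
      · exact ⟨[c], by simp [hst]⟩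
      · obtain ⟨l', hl'⟩ := ih x y' (by simp [y']; omega) (by simp [y']; omega)
        refine ⟨c :: l' ++ [c], ?_⟩
        have hxy : x ≠ y := by intro h'; rw [h'] at h1; omega
        have key := Equiv.swap_mul_swap_mul_swap (x := x) (y := y') (z := y) hxy' hxy
        calc ((c :: l' ++ [c]).map (sTr n)).prod
            = sTr n c * (((l'.map (sTr n)).prod) * sTr n c) := by
              simp [List.prod_append]
          _ = Equiv.swap y' y * Equiv.swap x y' * Equiv.swap y' y := by
              rw [hl', hst, mul_assoc]
          _ = Equiv.swap y x := key
          _ = Equiv.swap x y := Equiv.swap_comm _ _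

lemma swap_word (x y : Fin n) : ∃ l : List (Fin (n-1)), (l.map (sTr n)).prod = Equiv.swap x y := by
  rcases le_or_gt x.1 y.1 with h | h
  · exact swap_word_aux (y.1 - x.1) x y h le_rfl
  · obtain ⟨l, hl⟩ := swap_word_aux (x.1 - y.1) y x (by omega) le_rfl
    exact ⟨l, by rw [hl, Equiv.swap_comm]⟩

lemma exists_word (w : Equiv.Perm (Fin n)) :
    ∃ l : List (Fin (n-1)), (l.map (sTr n)).prod = w := by
  refine Equiv.Perm.swap_induction_on w ⟨[], rfl⟩ ?_
  intro f x y hxy ih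
  obtain ⟨l1, h1⟩ := ih
  obtain ⟨l2, h2⟩ := swap_word x y
  exact ⟨l2 ++ l1, by simp [List.prod_append, h1, h2]⟩

lemma len_le {w : Equiv.Perm (Fin n)} {l : List (Fin (n-1))}
    (h : (l.map (sTr n)).prod = w) : len n w ≤ l.length :=
  Nat.sInf_le ⟨l, rfl, h⟩

lemma exists_redword (w : Equiv.Perm (Fin n)) : ∃ l, IsRedWord n l w := by
  obtain ⟨l0, hl0⟩ := exists_word w
  have hne : {k | ∃ l : List (Fin (n-1)), l.length = k ∧ (l.map (sTr n)).prod = w}.Nonempty :=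
    ⟨l0.length, l0, rfl, hl0⟩
  obtain ⟨l, hlen, hprod⟩ := Nat.sInf_mem hne
  exact ⟨l, hprod, hlen⟩

lemma len_one : len n (1 : Equiv.Perm (Fin n)) = 0 :=
  Nat.le_zero.mp (len_le (l := []) rfl)

lemma eq_one_of_len_zero {w : Equiv.Perm (Fin n)} (h : len n w = 0) : w = 1 := by
  obtain ⟨l, hprod, hlen⟩ := exists_redword w
  rw [h] at hlen
  rw [List.length_eq_zero_iff] at hlen
  subst hlen; exact hprod.symm

lemma sign_len (w : Equiv.Perm (Fin n)) : Equiv.Perm.sign w = (-1) ^ (len n w) := by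
  obtain ⟨l, hprod, hlen⟩ := exists_redword w
  have := sign_word (n := n) l
  rw [hprod, hlen] at this
  exact this

lemma len_sTr (i : Fin (n-1)) : len n (sTr n i) = 1 := by
  have h1 : len n (sTr n i) ≤ 1 := len_le (l := [i]) (by simp)
  have h0 : len n (sTr n i) ≠ 0 := fun h => sTr_ne_one i (eq_one_of_len_zero h)
  omega

lemma exists_sTr_of_len_one {w : Equiv.Perm (Fin n)} (h : len n w = 1) :
    ∃ c, w = sTr n c := by
  obtain ⟨l, hprod, hlen⟩ := exists_redword w
  rw [h] at hlen
  rw [List.length_eq_one_iff] at hlen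
  obtain ⟨c, rfl⟩ := hlen
  exact ⟨c, by simpa using hprod.symm⟩

lemma len_adj {i j : Fin (n-1)} (hij : i ≠ j) : len n (sTr n i * sTr n j) = 2 := by
  have h2 : len n (sTr n i * sTr n j) ≤ 2 := len_le (l := [i, j]) (by simp)
  have h0 : sTr n i * sTr n j ≠ 1 := by
    intro h
    exact hij (sTr_injective (by
      have : sTr n i = (sTr n j)⁻¹ := eq_inv_of_mul_eq_one_left h
      rwa [sTr_inv] at this))
  have hs : Equiv.Perm.sign (sTr n i * sTr n j) = 1 := by
    simp [sign_sTr]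
  have h1 : len n (sTr n i * sTr n j) ≠ 1 := by
    intro h
    rw [sign_len, h] at hs
    simp at hs
  have hz : len n (sTr n i * sTr n j) ≠ 0 := fun h => h0 (eq_one_of_len_zero h)
  omega

lemma adj_word_unique {a c d : Fin (n-1)} (ha : a.1 + 1 < n - 1)
    (h : sTr n c * sTr n d = sTr n a * sTr n ⟨a.1+1, ha⟩) :
    c = a ∧ d = ⟨a.1+1, ha⟩ := by
  have han : a.1 + 1 < n := by omega
  have han0 : a.1 < n := by omega
  set a' : Fin (n-1) := ⟨a.1+1, ha⟩ with ha'
  have E : ∀ x : Fin n, (sTr n c (sTr n d x)).1 = (sTr n a (sTr n a' x)).1 := by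
    intro x
    have := congrFun (congrArg (fun (e : Equiv.Perm (Fin n)) => (e : Fin n → Fin n)) h) x
    simp only [Equiv.Perm.coe_mul, Function.comp_apply] at this
    exact congrArg Fin.val this
  have hval : a'.1 = a.1 + 1 := rfl
  set p0 : Fin n := ⟨a.1, han0⟩ with hp0
  set p1 : Fin n := ⟨a.1+1, han⟩ with hp1
  have hp0v : p0.1 = a.1 := rfl
  have hp1v : p1.1 = a.1 + 1 := rfl
  have A1 := sTr_rel d p1
  have A2 := sTr_rel c (sTr n d p1)
  have A3 := sTr_rel a' p1
  have A4 := sTr_rel a (sTr n a' p1)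
  have E1 := E p1
  have B1 := sTr_rel d p0
  have B2 := sTr_rel c (sTr n d p0)
  have B3 := sTr_rel a' p0
  have B4 := sTr_rel a (sTr n a' p0)
  have E2 := E p0
  have : c.1 = a.1 ∧ d.1 = a.1 + 1 := by omega
  exact ⟨Fin.ext this.1, Fin.ext this.2⟩

lemma redword_one {l : List (Fin (n-1))} (hl : IsRedWord n l (1 : Equiv.Perm (Fin n))) :
    l = [] := by
  have := hl.2
  rw [len_one, List.length_eq_zero_iff] at this
  exact this

lemma redword_sTr {a : Fin (n-1)} {l : List (Fin (n-1))} (hl : IsRedWord n l (sTr n a)) :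
    l = [a] := by
  have h2 := hl.2
  rw [len_sTr, List.length_eq_one_iff] at h2
  obtain ⟨c, rfl⟩ := h2
  have h1 := hl.1
  simp only [List.map_cons, List.map_nil, List.prod_cons, List.prod_nil, mul_one] at h1
  rw [sTr_injective h1]

lemma redword_adj {a : Fin (n-1)} (ha : a.1 + 1 < n - 1) {l : List (Fin (n-1))}
    (hl : IsRedWord n l (sTr n a * sTr n ⟨a.1+1, ha⟩)) : l = [a, ⟨a.1+1, ha⟩] := by
  have h2 := hl.2
  rw [len_adj (by intro h; have := congrArg Fin.val h; simp at this)] at h2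
  match l, h2 with
  | [c, d], _ =>
    have h1 := hl.1
    simp only [List.map_cons, List.map_nil, List.prod_cons, List.prod_nil, mul_one] at h1
    obtain ⟨rfl, rfl⟩ := adj_word_unique ha h1
    rfl

lemma redword_adj' {a : Fin (n-1)} (ha : a.1 + 1 < n - 1) {l : List (Fin (n-1))}
    (hl : IsRedWord n l (sTr n ⟨a.1+1, ha⟩ * sTr n a)) : l = [⟨a.1+1, ha⟩, a] := by
  have h2 := hl.2
  rw [len_adj (by intro h; have := congrArg Fin.val h; simp at this)] at h2
  match l, h2 with
  | [c, d], _ =>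
    have h1 := hl.1
    simp only [List.map_cons, List.map_nil, List.prod_cons, List.prod_nil, mul_one] at h1
    have h1' : sTr n d * sTr n c = sTr n a * sTr n ⟨a.1+1, ha⟩ := by
      have := congrArg (·⁻¹) h1
      simp only [mul_inv_rev, sTr_inv] at this
      exact this
    obtain ⟨rfl, rfl⟩ := adj_word_unique ha h1'
    rfl

lemma billey_nil (v : Equiv.Perm (Fin n)) :
    billeyWord n [] v = if v = 1 then 1 else 0 := by
  rw [show billeyWord n [] v = ∑ J ∈ Finset.univ.filter (fun J : Finset (Fin 0) =>
      J.card = len n v ∧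
        ((J.sort (· ≤ ·)).map (fun j => sTr n (([] : List (Fin (n-1))).get j))).prod = v),
      ∏ j ∈ J, rPoly n [] j from rfl]
  rw [show (Finset.univ : Finset (Finset (Fin 0))) = {∅} from by decide]
  rw [Finset.filter_singleton]
  by_cases hv : v = 1
  · subst hv
    rw [if_pos (by simp [len_one, Finset.sort_empty])]
    simp
  · rw [if_neg (by simp [Finset.sort_empty]; intro h; exact fun h2 => hv h2.symm)]
    simp [hv]

lemma billey_single (c : Fin (n-1)) (v : Equiv.Perm (Fin n)) :
    billeyWord n [c] v = if v = 1 then 1 else if v = sTr n c then alphaR n c else 0 := by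
  have hr0 : rPoly n [c] ((0 : Fin 1) : Fin ([c].length)) = alphaR n c := by
    simp [rPoly, MvPolynomial.rename_id]
  rw [show billeyWord n [c] v = ∑ J ∈ Finset.univ.filter (fun J : Finset (Fin 1) =>
      J.card = len n v ∧
        ((J.sort (· ≤ ·)).map (fun j => sTr n ([c].get j))).prod = v),
      ∏ j ∈ J, rPoly n [c] j from rfl]
  rw [show (Finset.univ : Finset (Finset (Fin 1))) = {∅, {0}} from by decide]
  rw [Finset.sum_filter, Finset.sum_insert (by decide), Finset.sum_singleton]
  have hc0 : ((∅ : Finset (Fin 1)).card = len n v ∧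
      (((∅ : Finset (Fin 1)).sort (· ≤ ·)).map
        (fun j => sTr n ([c].get j))).prod = v) ↔ v = 1 := by
    constructor
    · rintro ⟨h1, h2⟩; rw [← h2]; simp [Finset.sort_empty]
    · rintro rfl; simp [Finset.sort_empty, len_one]
  have hc1 : (({0} : Finset (Fin 1)).card = len n v ∧
      ((({0} : Finset (Fin 1)).sort (· ≤ ·)).map
        (fun j => sTr n ([c].get j))).prod = v) ↔ v = sTr n c := by
    constructor
    · rintro ⟨h1, h2⟩; rw [← h2]; simp [Finset.sort_singleton]
    · rintro rfl; simp [Finset.sort_singleton, len_sTr]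
  rw [if_congr hc0 rfl rfl, if_congr hc1 rfl rfl]
  simp only [Finset.prod_empty, Finset.prod_singleton, hr0]
  by_cases h1 : v = 1
  · subst h1
    rw [if_pos rfl, if_pos rfl, if_neg (fun h => sTr_ne_one c h.symm)]
    simp
  · rw [if_neg h1, if_neg h1]
    by_cases h2 : v = sTr n c <;> simp [h2]

lemma billey_pair (c d : Fin (n-1)) (hcd : c ≠ d) (v : Equiv.Perm (Fin n)) :
    billeyWord n [c, d] v =
      if v = 1 then 1
      else if v = sTr n c then alphaR n c
      else if v = sTr n d then rename (⇑(sTr n c)) (alphaR n d)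
      else if v = sTr n c * sTr n d then alphaR n c * rename (⇑(sTr n c)) (alphaR n d)
      else 0 := by
  have hne1 : sTr n c ≠ 1 := sTr_ne_one c
  have hne2 : sTr n d ≠ 1 := sTr_ne_one d
  have hne3 : sTr n c ≠ sTr n d := fun h => hcd (sTr_injective h)
  have hne4 : sTr n c * sTr n d ≠ 1 := by
    intro h
    have : sTr n c = (sTr n d)⁻¹ := eq_inv_of_mul_eq_one_left h
    rw [sTr_inv] at this
    exact hne3 this
  have hne5 : sTr n c * sTr n d ≠ sTr n c := by
    intro h; rw [mul_eq_left] at h; exact hne2 h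
  have hne6 : sTr n c * sTr n d ≠ sTr n d := by
    intro h; rw [mul_eq_right] at h; exact hne1 h
  have hr0 : rPoly n [c, d] ((0 : Fin 2) : Fin ([c, d].length)) = alphaR n c := by
    simp [rPoly, MvPolynomial.rename_id]
  have hr1 : rPoly n [c, d] ((1 : Fin 2) : Fin ([c, d].length)) = rename (⇑(sTr n c)) (alphaR n d) := by
    simp [rPoly]
  rw [show billeyWord n [c, d] v = ∑ J ∈ Finset.univ.filter (fun J : Finset (Fin 2) =>
      J.card = len n v ∧
        ((J.sort (· ≤ ·)).map (fun j => sTr n ([c, d].get j))).prod = v),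
      ∏ j ∈ J, rPoly n [c, d] j from rfl]
  rw [show (Finset.univ : Finset (Finset (Fin 2))) = {∅, {0}, {1}, {0,1}} from by decide]
  rw [Finset.sum_filter, Finset.sum_insert (by decide), Finset.sum_insert (by decide),
    Finset.sum_insert (by decide), Finset.sum_singleton]
  have hsort : (({0, 1} : Finset (Fin 2)).sort (· ≤ ·)) = [0, 1] := by
    rw [Finset.sort_insert] <;> simp [Finset.sort_singleton]
  have hc0 : ((∅ : Finset (Fin 2)).card = len n v ∧
      (((∅ : Finset (Fin 2)).sort (· ≤ ·)).map
        (fun j => sTr n ([c, d].get j))).prod = v) ↔ v = 1 := by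
    constructor
    · rintro ⟨h1, h2⟩; rw [← h2]; simp [Finset.sort_empty]
    · rintro rfl; simp [Finset.sort_empty, len_one]
  have hcA : (({0} : Finset (Fin 2)).card = len n v ∧
      ((({0} : Finset (Fin 2)).sort (· ≤ ·)).map
        (fun j => sTr n ([c, d].get j))).prod = v) ↔ v = sTr n c := by
    constructor
    · rintro ⟨h1, h2⟩; rw [← h2]; simp [Finset.sort_singleton]
    · rintro rfl; simp [Finset.sort_singleton, len_sTr]
  have hcB : (({1} : Finset (Fin 2)).card = len n v ∧
      ((({1} : Finset (Fin 2)).sort (· ≤ ·)).map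
        (fun j => sTr n ([c, d].get j))).prod = v) ↔ v = sTr n d := by
    constructor
    · rintro ⟨h1, h2⟩; rw [← h2]; simp [Finset.sort_singleton]
    · rintro rfl; simp [Finset.sort_singleton, len_sTr]
  have hcC : (({0, 1} : Finset (Fin 2)).card = len n v ∧
      ((({0, 1} : Finset (Fin 2)).sort (· ≤ ·)).map
        (fun j => sTr n ([c, d].get j))).prod = v) ↔ v = sTr n c * sTr n d := by
    rw [hsort]
    constructor
    · rintro ⟨h1, h2⟩; rw [← h2]; simp
    · rintro rfl
      constructor
      · rw [len_adj hcd]; decide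
      · simp
  rw [if_congr hc0 rfl rfl, if_congr hcA rfl rfl, if_congr hcB rfl rfl, if_congr hcC rfl rfl]
  have hp01 : (∏ j ∈ ({0, 1} : Finset (Fin 2)), rPoly n [c, d] j) =
      rPoly n [c, d] ((0 : Fin 2) : Fin ([c, d].length)) * rPoly n [c, d] ((1 : Fin 2) : Fin ([c, d].length)) := by
    rw [Finset.prod_insert (by decide), Finset.prod_singleton]
  simp only [Finset.prod_empty, Finset.prod_singleton, hp01, hr0, hr1]
  by_cases h1 : v = 1
  · simp [h1, hne1, hne2, hne3, hne4, hne5, hne6, Ne.symm hne1, Ne.symm hne2, Ne.symm hne3, Ne.symm hne4, Ne.symm hne5, Ne.symm hne6]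
  · by_cases h2 : v = sTr n c
    · simp [h1, h2, hne1, hne2, hne3, hne4, hne5, hne6, Ne.symm hne1, Ne.symm hne2, Ne.symm hne3, Ne.symm hne4, Ne.symm hne5, Ne.symm hne6]
    · by_cases h3 : v = sTr n d
      · simp [h1, h2, h3, hne1, hne2, hne3, hne4, hne5, hne6, Ne.symm hne1, Ne.symm hne2, Ne.symm hne3, Ne.symm hne4, Ne.symm hne5, Ne.symm hne6]
      · by_cases h4 : v = sTr n c * sTr n d <;> simp [h1, h2, h3, h4, hne1, hne2, hne3, hne4, hne5, hne6, Ne.symm hne1, Ne.symm hne2, Ne.symm hne3, Ne.symm hne4, Ne.symm hne5, Ne.symm hne6]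

lemma sigma_choose (u : Equiv.Perm (Fin n)) {l} (hl : IsRedWord n l u)
    (huniq : ∀ l', IsRedWord n l' u → l' = l) (v : Equiv.Perm (Fin n)) :
    sigma n v u = billeyWord n l v := by
  rw [sigma, dif_pos (⟨l, hl⟩ : ∃ b, IsRedWord n b u)]
  rw [huniq _ (Exists.choose_spec (⟨l, hl⟩ : ∃ b, IsRedWord n b u))]

lemma sigma_at_one (v : Equiv.Perm (Fin n)) :
    sigma n v 1 = if v = 1 then 1 else 0 := by
  rw [sigma_choose 1 ⟨by simp, by simp [len_one]⟩ (fun l' h => redword_one h), billey_nil]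

lemma sigma_at_sTr (a : Fin (n-1)) (v : Equiv.Perm (Fin n)) :
    sigma n v (sTr n a) = if v = 1 then 1 else if v = sTr n a then alphaR n a else 0 := by
  rw [sigma_choose (sTr n a) ⟨by simp, by simp [len_sTr]⟩ (fun l' h => redword_sTr h),
    billey_single]

lemma sigma_at_adj {a : Fin (n-1)} (ha : a.1 + 1 < n - 1) (v : Equiv.Perm (Fin n)) :
    sigma n v (sTr n a * sTr n ⟨a.1+1, ha⟩) =
      if v = 1 then 1
      else if v = sTr n a then alphaR n a
      else if v = sTr n ⟨a.1+1, ha⟩ then rename (⇑(sTr n a)) (alphaR n ⟨a.1+1, ha⟩)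
      else if v = sTr n a * sTr n ⟨a.1+1, ha⟩ then
        alphaR n a * rename (⇑(sTr n a)) (alphaR n ⟨a.1+1, ha⟩)
      else 0 := by
  have hane : a ≠ (⟨a.1+1, ha⟩ : Fin (n-1)) := by
    intro h; have := congrArg Fin.val h; simp at this
  rw [sigma_choose (sTr n a * sTr n ⟨a.1+1, ha⟩)
    ⟨by simp, by simp [len_adj hane]⟩ (fun l' h => redword_adj ha h),
    billey_pair _ _ hane]

lemma sigma_at_adj' {a : Fin (n-1)} (ha : a.1 + 1 < n - 1) (v : Equiv.Perm (Fin n)) :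
    sigma n v (sTr n ⟨a.1+1, ha⟩ * sTr n a) =
      if v = 1 then 1
      else if v = sTr n ⟨a.1+1, ha⟩ then alphaR n ⟨a.1+1, ha⟩
      else if v = sTr n a then rename (⇑(sTr n ⟨a.1+1, ha⟩)) (alphaR n a)
      else if v = sTr n ⟨a.1+1, ha⟩ * sTr n a then
        alphaR n ⟨a.1+1, ha⟩ * rename (⇑(sTr n ⟨a.1+1, ha⟩)) (alphaR n a)
      else 0 := by
  have hane : (⟨a.1+1, ha⟩ : Fin (n-1)) ≠ a := by
    intro h; have := congrArg Fin.val h; simp at this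
  rw [sigma_choose (sTr n ⟨a.1+1, ha⟩ * sTr n a)
    ⟨by simp, by simp [len_adj hane]⟩ (fun l' h => redword_adj' ha h),
    billey_pair _ _ hane]

lemma sigma_one_left (u : Equiv.Perm (Fin n)) : sigma n (1 : Equiv.Perm (Fin n)) u = 1 := by
  rw [sigma, dif_pos (exists_redword u)]
  unfold billeyWord
  have hfil : (Finset.univ.filter (fun J : Finset (Fin (List.length (exists_redword u).choose)) =>
      J.card = len n (1 : Equiv.Perm (Fin n)) ∧
        ((J.sort (· ≤ ·)).map (fun j => sTr n ((exists_redword u).choose.get j))).prod = 1)) =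
      {∅} := by
    ext J
    simp only [Finset.mem_filter, Finset.mem_univ, true_and, Finset.mem_singleton, len_one,
      Finset.card_eq_zero]
    constructor
    · rintro ⟨h, _⟩; exact h
    · rintro rfl; exact ⟨rfl, by simp [Finset.sort_empty]⟩
  rw [hfil, Finset.sum_singleton, Finset.prod_empty]

/-- boundary preservation for parabolic subgroups -/
lemma wpar_bound {P : Set (Fin (n-1))} {b : Fin (n-1)} (hb : b ∉ P) :
    ∀ u ∈ WPar n P, ∀ x : Fin n, x.1 ≤ b.1 → (u x).1 ≤ b.1 := by
  let S : Subgroup (Equiv.Perm (Fin n)) :=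
    { carrier := {g | ∀ x : Fin n, x.1 ≤ b.1 → (g x).1 ≤ b.1}
      mul_mem' := fun {g h} hg hh x hx => hg _ (hh x hx)
      one_mem' := fun x hx => by simpa using hx
      inv_mem' := by
        intro g hg x hx
        let T : Finset (Fin n) := Finset.univ.filter (fun x => x.1 ≤ b.1)
        have hsub : T.image g ⊆ T := by
          intro y hy
          simp only [T, Finset.mem_image, Finset.mem_filter, Finset.mem_univ, true_and] at hy ⊢
          obtain ⟨z, hz, rfl⟩ := hy
          exact hg z hz
        have hcard : T.card ≤ (T.image g).card := by
          rw [Finset.card_image_of_injective _ g.injective]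
        have heq : T.image g = T := Finset.eq_of_subset_of_card_le hsub hcard
        have hxT : x ∈ T := by simp [T, hx]
        rw [← heq] at hxT
        obtain ⟨y, hyT, hyx⟩ := Finset.mem_image.mp hxT
        have hgy : g⁻¹ x = y := by rw [← hyx]; simp
        rw [hgy]
        simpa [T] using hyT }
  have hle : WPar n P ≤ S := by
    rw [WPar]
    rw [Subgroup.closure_le]
    rintro _ ⟨p, hp, rfl⟩
    intro x hx
    have hpb : p.1 ≠ b.1 := fun h => hb (Fin.ext h ▸ hp)
    rcases sTr_rel p x with ⟨h1, h2⟩ | ⟨h1, h2⟩ | ⟨h1, h2, h3⟩ <;> omega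
  intro u hu
  exact hle hu

lemma sTr_mem_WPar {P : Set (Fin (n-1))} {a : Fin (n-1)} (ha : a ∈ P) :
    sTr n a ∈ WPar n P := Subgroup.subset_closure ⟨a, ha, rfl⟩

lemma one_mem_minReps (P : Set (Fin (n-1))) : (1 : Equiv.Perm (Fin n)) ∈ minReps n P :=
  fun u _ => by simp [len_one]

lemma sTr_val_left {i : Fin (n-1)} {x : Fin n} (h : x.1 = i.1) : (sTr n i x).1 = i.1 + 1 := by
  rw [sTr_apply_val, if_pos h]

lemma sTr_val_right {i : Fin (n-1)} {x : Fin n} (h : x.1 = i.1 + 1) : (sTr n i x).1 = i.1 := by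
  rw [sTr_apply_val, if_neg (by omega), if_pos h]

lemma sTr_val_other {i : Fin (n-1)} {x : Fin n} (h1 : x.1 ≠ i.1) (h2 : x.1 ≠ i.1 + 1) :
    (sTr n i x).1 = x.1 := by
  rw [sTr_apply_val, if_neg h1, if_neg h2]

lemma fin_ne_of_val {a b : Fin (n-1)} (h : a.1 ≠ b.1) : a ≠ b :=
  fun he => h (congrArg Fin.val he)

lemma adj_inv {a : Fin (n-1)} (ha : a.1 + 1 < n - 1) :
    (sTr n a * sTr n ⟨a.1+1, ha⟩)⁻¹ = sTr n ⟨a.1+1, ha⟩ * sTr n a := by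
  rw [mul_inv_rev, sTr_inv, sTr_inv]

lemma adj_mem_WPar_iff {P : Set (Fin (n-1))} {a : Fin (n-1)} (ha : a.1 + 1 < n - 1) :
    sTr n a * sTr n ⟨a.1+1, ha⟩ ∈ WPar n P ↔
      a ∈ P ∧ (⟨a.1+1, ha⟩ : Fin (n-1)) ∈ P := by
  constructor
  · intro h
    constructor
    · by_contra haP
      have hb := wpar_bound haP _ h (⟨a.1, by omega⟩ : Fin n) (by simp)
      rw [Equiv.Perm.mul_apply] at hb
      have h1 : (sTr n ⟨a.1+1, ha⟩ (⟨a.1, by omega⟩ : Fin n)).1 = a.1 :=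
        sTr_val_other (by simp only [Fin.val_mk]; omega) (by simp only [Fin.val_mk]; omega)
      have h2 := sTr_val_left (i := a) h1
      omega
    · by_contra haP
      have hb := wpar_bound haP _ h (⟨a.1+1, by omega⟩ : Fin n) (by simp)
      rw [Equiv.Perm.mul_apply] at hb
      have h1 : (sTr n ⟨a.1+1, ha⟩ (⟨a.1+1, by omega⟩ : Fin n)).1 = a.1 + 2 :=
        sTr_val_left (by simp)
      have h2 := sTr_val_other (i := a) (x := sTr n ⟨a.1+1, ha⟩ (⟨a.1+1, by omega⟩ : Fin n))
        (by omega) (by omega)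
      simp only [Fin.val_mk] at hb
      omega
  · intro ⟨h1, h2⟩
    exact mul_mem (sTr_mem_WPar h1) (sTr_mem_WPar h2)

lemma adj'_mem_WPar_iff {P : Set (Fin (n-1))} {a : Fin (n-1)} (ha : a.1 + 1 < n - 1) :
    sTr n ⟨a.1+1, ha⟩ * sTr n a ∈ WPar n P ↔
      a ∈ P ∧ (⟨a.1+1, ha⟩ : Fin (n-1)) ∈ P := by
  rw [← adj_inv ha, inv_mem_iff]
  exact adj_mem_WPar_iff ha

lemma adj_mem_minReps {P : Set (Fin (n-1))} {a : Fin (n-1)} (ha : a.1 + 1 < n - 1)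
    (hP : (⟨a.1+1, ha⟩ : Fin (n-1)) ∉ P) :
    sTr n a * sTr n ⟨a.1+1, ha⟩ ∈ minReps n P := by
  intro u hu
  have hane : a ≠ (⟨a.1+1, ha⟩ : Fin (n-1)) := fin_ne_of_val (by simp)
  rw [len_adj hane]
  by_contra hlt
  push_neg at hlt
  have hm : len n (sTr n a * sTr n ⟨a.1+1, ha⟩ * u) = 0 ∨
      len n (sTr n a * sTr n ⟨a.1+1, ha⟩ * u) = 1 := by omega
  rcases hm with hm | hm
  · have he := eq_one_of_len_zero hm
    have hue : u = (sTr n a * sTr n ⟨a.1+1, ha⟩)⁻¹ := eq_inv_of_mul_eq_one_right he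
    rw [hue, inv_mem_iff, adj_mem_WPar_iff ha] at hu
    exact hP hu.2
  · obtain ⟨c, hc⟩ := exists_sTr_of_len_one hm
    have hue : u = (sTr n a * sTr n ⟨a.1+1, ha⟩)⁻¹ * sTr n c := by
      rw [← hc, inv_mul_cancel_left]
    rw [hue] at hu
    set x : Fin n := sTr n c (⟨a.1, by omega⟩ : Fin n) with hx
    have hxv : x.1 ≤ a.1 + 1 := by
      have := sTr_rel c (⟨a.1, by omega⟩ : Fin n)
      simp only [Fin.val_mk] at this
      omega
    have hb := wpar_bound hP _ hu x hxv
    rw [adj_inv ha] at hb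
    simp only [Equiv.Perm.mul_apply] at hb
    rw [hx, sTr_sTr] at hb
    have h1 : (sTr n a (⟨a.1, by omega⟩ : Fin n)).1 = a.1 + 1 := sTr_val_left (by simp)
    have h2 : (sTr n ⟨a.1+1, ha⟩ (sTr n a (⟨a.1, by omega⟩ : Fin n))).1 = a.1 + 2 :=
      sTr_val_left h1
    omega

lemma adj_not_mem_minReps {P : Set (Fin (n-1))} {a : Fin (n-1)} (ha : a.1 + 1 < n - 1)
    (hP : (⟨a.1+1, ha⟩ : Fin (n-1)) ∈ P) :
    sTr n a * sTr n ⟨a.1+1, ha⟩ ∉ minReps n P := by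
  intro hm
  have hane : a ≠ (⟨a.1+1, ha⟩ : Fin (n-1)) := fin_ne_of_val (by simp)
  have := hm (sTr n ⟨a.1+1, ha⟩) (sTr_mem_WPar hP)
  rw [len_adj hane, mul_assoc, sTr_mul_self, mul_one, len_sTr] at this
  omega

lemma adj'_mem_minReps {P : Set (Fin (n-1))} {a : Fin (n-1)} (ha : a.1 + 1 < n - 1)
    (hP : a ∉ P) :
    sTr n ⟨a.1+1, ha⟩ * sTr n a ∈ minReps n P := by
  intro u hu
  have hane : (⟨a.1+1, ha⟩ : Fin (n-1)) ≠ a := fin_ne_of_val (by simp)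
  rw [len_adj hane]
  by_contra hlt
  push_neg at hlt
  have hm : len n (sTr n ⟨a.1+1, ha⟩ * sTr n a * u) = 0 ∨
      len n (sTr n ⟨a.1+1, ha⟩ * sTr n a * u) = 1 := by omega
  have hinv : (sTr n ⟨a.1+1, ha⟩ * sTr n a)⁻¹ = sTr n a * sTr n ⟨a.1+1, ha⟩ := by
    rw [mul_inv_rev, sTr_inv, sTr_inv]
  rcases hm with hm | hm
  · have he := eq_one_of_len_zero hm
    have hue : u = (sTr n ⟨a.1+1, ha⟩ * sTr n a)⁻¹ := eq_inv_of_mul_eq_one_right he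
    rw [hue, inv_mem_iff, adj'_mem_WPar_iff ha] at hu
    exact hP hu.1
  · obtain ⟨c, hc⟩ := exists_sTr_of_len_one hm
    have hue : u = (sTr n ⟨a.1+1, ha⟩ * sTr n a)⁻¹ * sTr n c := by
      rw [← hc, inv_mul_cancel_left]
    rw [hue, hinv] at hu
    by_cases hca : c.1 = a.1
    · have hb := wpar_bound hP _ hu (⟨a.1, by omega⟩ : Fin n) (by simp)
      simp only [Equiv.Perm.mul_apply] at hb
      have h1 : (sTr n c (⟨a.1, by omega⟩ : Fin n)).1 = a.1 + 1 := by
        rw [sTr_val_left (by simp [hca]), hca]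
      have h2 : (sTr n ⟨a.1+1, ha⟩ (sTr n c (⟨a.1, by omega⟩ : Fin n))).1 = a.1 + 2 :=
        sTr_val_left (by simpa using h1)
      have h3 := sTr_val_other (i := a)
        (x := sTr n ⟨a.1+1, ha⟩ (sTr n c (⟨a.1, by omega⟩ : Fin n))) (by omega) (by omega)
      omega
    · set x : Fin n := sTr n c (⟨a.1, by omega⟩ : Fin n) with hx
      have hxv : x.1 ≤ a.1 := by
        have := sTr_rel c (⟨a.1, by omega⟩ : Fin n)
        simp only [Fin.val_mk] at this
        omega
      have hb := wpar_bound hP _ hu x hxv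
      simp only [Equiv.Perm.mul_apply] at hb
      rw [hx, sTr_sTr] at hb
      have h1 : (sTr n ⟨a.1+1, ha⟩ (⟨a.1, by omega⟩ : Fin n)).1 = a.1 :=
        sTr_val_other (by simp only [Fin.val_mk]; omega) (by simp only [Fin.val_mk]; omega)
      have h2 : (sTr n a (sTr n ⟨a.1+1, ha⟩ (⟨a.1, by omega⟩ : Fin n))).1 = a.1 + 1 :=
        sTr_val_left h1
      omega

lemma adj'_not_mem_minReps {P : Set (Fin (n-1))} {a : Fin (n-1)} (ha : a.1 + 1 < n - 1)
    (hP : a ∈ P) :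
    sTr n ⟨a.1+1, ha⟩ * sTr n a ∉ minReps n P := by
  intro hm
  have hane : (⟨a.1+1, ha⟩ : Fin (n-1)) ≠ a := fin_ne_of_val (by simp)
  have := hm (sTr n a) (sTr_mem_WPar hP)
  rw [len_adj hane, mul_assoc, sTr_mul_self, mul_one, len_sTr] at this
  omega

def evalPt (a : Fin (n-1)) : Fin n → ℂ := fun k =>
  if k.1 = a.1 then 9 else if k.1 = a.1 + 1 then 3 else if k.1 = a.1 + 2 then 1 else 0

lemma evA (a : Fin (n-1)) : eval (evalPt a) (alphaR n a) = 6 := by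
  simp only [alphaR, map_sub, eval_X, evalPt, Fin.val_mk]
  split_ifs <;> first | (exfalso; omega) | norm_num

lemma evB (a : Fin (n-1)) (ha : a.1 + 1 < n - 1) :
    eval (evalPt a) (alphaR n ⟨a.1+1, ha⟩) = 2 := by
  simp only [alphaR, map_sub, eval_X, evalPt, Fin.val_mk]
  split_ifs <;> first | (exfalso; omega) | norm_num

lemma evC (a : Fin (n-1)) (ha : a.1 + 1 < n - 1) :
    eval (evalPt a) (rename (⇑(sTr n a)) (alphaR n ⟨a.1+1, ha⟩)) = 8 := by
  simp only [alphaR, map_sub, rename_X, eval_X, evalPt]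
  have h1 : (sTr n a (⟨(⟨a.1+1, ha⟩ : Fin (n-1)).1, by omega⟩ : Fin n)).1 = a.1 :=
    sTr_val_right (by simp)
  have h2 : (sTr n a (⟨(⟨a.1+1, ha⟩ : Fin (n-1)).1 + 1, by omega⟩ : Fin n)).1 = a.1 + 2 :=
    sTr_val_other (by simp only [Fin.val_mk]; omega) (by simp only [Fin.val_mk]; omega)
  rw [h1, h2]
  split_ifs <;> first | (exfalso; omega) | norm_num

lemma evC' (a : Fin (n-1)) (ha : a.1 + 1 < n - 1) :
    eval (evalPt a) (rename (⇑(sTr n ⟨a.1+1, ha⟩)) (alphaR n a)) = 8 := by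
  simp only [alphaR, map_sub, rename_X, eval_X, evalPt]
  have h1 : (sTr n ⟨a.1+1, ha⟩ (⟨a.1, by omega⟩ : Fin n)).1 = a.1 :=
    sTr_val_other (by simp only [Fin.val_mk]; omega) (by simp only [Fin.val_mk]; omega)
  have h2 : (sTr n ⟨a.1+1, ha⟩ (⟨a.1 + 1, by omega⟩ : Fin n)).1 = a.1 + 2 :=
    sTr_val_left (by simp)
  rw [h1, h2]
  split_ifs <;> first | (exfalso; omega) | norm_num

lemma adj_ne_one {a b : Fin (n-1)} (hab : a ≠ b) : sTr n a * sTr n b ≠ 1 := by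
  intro h
  have h2 := len_adj hab
  rw [h, len_one] at h2
  omega

lemma adj_ne_sTr {a b c : Fin (n-1)} (hab : a ≠ b) : sTr n a * sTr n b ≠ sTr n c := by
  intro h
  have h2 := len_adj hab
  rw [h, len_sTr] at h2
  omega

lemma adj_ne_adj' {a : Fin (n-1)} (ha : a.1 + 1 < n - 1) :
    sTr n a * sTr n ⟨a.1+1, ha⟩ ≠ sTr n ⟨a.1+1, ha⟩ * sTr n a := by
  intro h
  have hc := congrArg (fun e : Equiv.Perm (Fin n) => (e (⟨a.1, by omega⟩ : Fin n)).1) h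
  simp only [Equiv.Perm.mul_apply] at hc
  have h1 : (sTr n ⟨a.1+1, ha⟩ (⟨a.1, by omega⟩ : Fin n)).1 = a.1 :=
    sTr_val_other (by simp only [Fin.val_mk]; omega) (by simp only [Fin.val_mk]; omega)
  have h2 : (sTr n a (sTr n ⟨a.1+1, ha⟩ (⟨a.1, by omega⟩ : Fin n))).1 = a.1 + 1 :=
    sTr_val_left h1
  have h3 : (sTr n a (⟨a.1, by omega⟩ : Fin n)).1 = a.1 + 1 := sTr_val_left (by simp)
  have h4 : (sTr n ⟨a.1+1, ha⟩ (sTr n a (⟨a.1, by omega⟩ : Fin n))).1 = a.1 + 2 :=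
    sTr_val_left h3
  omega

lemma ane_a' {a : Fin (n-1)} (ha : a.1 + 1 < n - 1) : a ≠ (⟨a.1+1, ha⟩ : Fin (n-1)) :=
  fin_ne_of_val (by simp)

/-- Main characterization 1: σ_{s_a s_{a+1}} ∈ 𝓑_P iff (a+1 ∈ P → a ∈ P). -/
lemma mem_star_iff {P : Set (Fin (n-1))} {a : Fin (n-1)} (ha : a.1 + 1 < n - 1) :
    (fun u => sigma n (sTr n a * sTr n ⟨a.1+1, ha⟩) u) ∈ parabolicBasis n P ↔
      ((⟨a.1+1, ha⟩ : Fin (n-1)) ∈ P → a ∈ P) := by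
  have hane := ane_a' ha
  constructor
  · rintro ⟨v, hv, w, hw, hf⟩ hp
    have E : ∀ u, sigma n (sTr n a * sTr n ⟨a.1+1, ha⟩) u = sigma n v u * sigma n w u :=
      fun u => congrFun hf u
    -- key evaluations
    have hq1 : eval (evalPt a) (sigma n v (sTr n a * sTr n ⟨a.1+1, ha⟩)) *
        eval (evalPt a) (sigma n w (sTr n a * sTr n ⟨a.1+1, ha⟩)) = 48 := by
      rw [← map_mul, ← E _]
      rw [sigma_at_adj ha, if_neg (adj_ne_one hane), if_neg (adj_ne_sTr hane),
        if_neg (adj_ne_sTr hane), if_pos rfl, map_mul, evA, evC _ ha]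
      norm_num
    have hq2 : eval (evalPt a) (sigma n v (sTr n ⟨a.1+1, ha⟩ * sTr n a)) *
        eval (evalPt a) (sigma n w (sTr n ⟨a.1+1, ha⟩ * sTr n a)) = 0 := by
      rw [← map_mul, ← E _]
      rw [sigma_at_adj' ha, if_neg (adj_ne_one hane), if_neg (adj_ne_sTr hane),
        if_neg (adj_ne_sTr hane), if_neg (adj_ne_adj' ha)]
      simp
    have hvU := sigma_at_adj ha v
    have hwU := sigma_at_adj ha w
    split_ifs at hvU with hv1 hv2 hv3 hv4
    · -- v = 1
      rw [hvU, map_one, one_mul] at hq1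
      split_ifs at hwU with hw1 hw2 hw3 hw4
      · rw [hwU, map_one] at hq1; norm_num at hq1
      · rw [hwU, evA] at hq1; norm_num at hq1
      · rw [hwU, evC _ ha] at hq1; norm_num at hq1
      · rw [hw4] at hw
        exact ((adj_mem_WPar_iff ha).1 hw).1
      · rw [hwU, map_zero] at hq1; norm_num at hq1
    · -- v = sTr a : show contradiction via hq2
      have hvU' := sigma_at_adj' ha v
      rw [if_neg hv1, if_neg (by rw [hv2]; exact fun h => hane (sTr_injective h)), if_pos hv2] at hvU'
      have hwU' := sigma_at_adj' ha w
      rw [hvU', evC' _ ha] at hq2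
      -- need w value at U': first identify w from hq1
      rw [hvU, evA] at hq1
      split_ifs at hwU with hw1 hw2 hw3 hw4
      · rw [hwU, map_one] at hq1; norm_num at hq1
      · rw [hwU, evA] at hq1; norm_num at hq1
      · -- w = sTr a'
        rw [if_neg (by rw [hw3]; exact sTr_ne_one _), if_pos hw3] at hwU'
        rw [hwU', evB _ ha] at hq2
        norm_num at hq2
      · rw [hwU, map_mul, evA, evC _ ha] at hq1; norm_num at hq1
      · rw [hwU, map_zero] at hq1; norm_num at hq1
    · -- v = sTr a'
      have hvU' := sigma_at_adj' ha v
      rw [if_neg hv1, if_pos hv3] at hvU'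
      rw [hvU', evB _ ha] at hq2
      rw [hvU, evC _ ha] at hq1
      split_ifs at hwU with hw1 hw2 hw3 hw4
      · rw [hwU, map_one] at hq1; norm_num at hq1
      · -- w = sTr a
        have hwU' := sigma_at_adj' ha w
        rw [if_neg hw1, if_neg (by rw [hw2]; exact fun h => hane (sTr_injective h)), if_pos hw2] at hwU'
        rw [hwU', evC' _ ha] at hq2
        norm_num at hq2
      · rw [hwU, evC _ ha] at hq1; norm_num at hq1
      · rw [hwU, map_mul, evA, evC _ ha] at hq1; norm_num at hq1
      · rw [hwU, map_zero] at hq1; norm_num at hq1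
    · -- v = U : contradiction with minReps
      rw [hv4] at hv
      exact absurd hv (adj_not_mem_minReps ha hp)
    · rw [hvU, map_zero, zero_mul] at hq1; norm_num at hq1
  · intro hcond
    by_cases hp : (⟨a.1+1, ha⟩ : Fin (n-1)) ∈ P
    · exact ⟨1, one_mem_minReps P, sTr n a * sTr n ⟨a.1+1, ha⟩,
        (adj_mem_WPar_iff ha).2 ⟨hcond hp, hp⟩,
        by funext u; rw [sigma_one_left, one_mul]⟩
    · exact ⟨sTr n a * sTr n ⟨a.1+1, ha⟩, adj_mem_minReps ha hp, 1, one_mem _,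
        by funext u; rw [sigma_one_left, mul_one]⟩

/-- Main characterization 2: σ_{s_{a+1} s_a} ∈ 𝓑_P iff (a ∈ P → a+1 ∈ P). -/
lemma mem_bar_iff {P : Set (Fin (n-1))} {a : Fin (n-1)} (ha : a.1 + 1 < n - 1) :
    (fun u => sigma n (sTr n ⟨a.1+1, ha⟩ * sTr n a) u) ∈ parabolicBasis n P ↔
      (a ∈ P → (⟨a.1+1, ha⟩ : Fin (n-1)) ∈ P) := by
  have hane := ane_a' ha
  have hane' : (⟨a.1+1, ha⟩ : Fin (n-1)) ≠ a := Ne.symm hane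
  constructor
  · rintro ⟨v, hv, w, hw, hf⟩ hp
    have E : ∀ u, sigma n (sTr n ⟨a.1+1, ha⟩ * sTr n a) u = sigma n v u * sigma n w u :=
      fun u => congrFun hf u
    have hq1 : eval (evalPt a) (sigma n v (sTr n ⟨a.1+1, ha⟩ * sTr n a)) *
        eval (evalPt a) (sigma n w (sTr n ⟨a.1+1, ha⟩ * sTr n a)) = 16 := by
      rw [← map_mul, ← E _]
      rw [sigma_at_adj' ha, if_neg (adj_ne_one hane'), if_neg (adj_ne_sTr hane'),
        if_neg (adj_ne_sTr hane'), if_pos rfl, map_mul, evB _ ha, evC' _ ha]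
      norm_num
    have hq2 : eval (evalPt a) (sigma n v (sTr n a * sTr n ⟨a.1+1, ha⟩)) *
        eval (evalPt a) (sigma n w (sTr n a * sTr n ⟨a.1+1, ha⟩)) = 0 := by
      rw [← map_mul, ← E _]
      rw [sigma_at_adj ha, if_neg (adj_ne_one hane'), if_neg (adj_ne_sTr hane'),
        if_neg (adj_ne_sTr hane'), if_neg (Ne.symm (adj_ne_adj' ha))]
      simp
    have hvU := sigma_at_adj' ha v
    have hwU := sigma_at_adj' ha w
    split_ifs at hvU with hv1 hv2 hv3 hv4
    · -- v = 1
      rw [hvU, map_one, one_mul] at hq1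
      split_ifs at hwU with hw1 hw2 hw3 hw4
      · rw [hwU, map_one] at hq1; norm_num at hq1
      · rw [hwU, evB _ ha] at hq1; norm_num at hq1
      · rw [hwU, evC' _ ha] at hq1; norm_num at hq1
      · rw [hw4] at hw
        exact ((adj'_mem_WPar_iff ha).1 hw).2
      · rw [hwU, map_zero] at hq1; norm_num at hq1
    · -- v = sTr a'
      have hvU2 := sigma_at_adj ha v
      rw [if_neg hv1, if_neg (by rw [hv2]; exact fun h => hane' (sTr_injective h)),
        if_pos hv2] at hvU2
      rw [hvU2, evC _ ha] at hq2
      rw [hvU, evB _ ha] at hq1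
      split_ifs at hwU with hw1 hw2 hw3 hw4
      · rw [hwU, map_one] at hq1; norm_num at hq1
      · rw [hwU, evB _ ha] at hq1; norm_num at hq1
      · -- w = sTr a
        have hwU2 := sigma_at_adj ha w
        rw [if_neg hw1, if_pos hw3] at hwU2
        rw [hwU2, evA] at hq2
        norm_num at hq2
      · rw [hwU, map_mul, evB _ ha, evC' _ ha] at hq1; norm_num at hq1
      · rw [hwU, map_zero] at hq1; norm_num at hq1
    · -- v = sTr a
      have hvU2 := sigma_at_adj ha v
      rw [if_neg hv1, if_pos hv3] at hvU2
      rw [hvU2, evA] at hq2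
      rw [hvU, evC' _ ha] at hq1
      split_ifs at hwU with hw1 hw2 hw3 hw4
      · rw [hwU, map_one] at hq1; norm_num at hq1
      · -- w = sTr a'
        have hwU2 := sigma_at_adj ha w
        rw [if_neg hw1, if_neg (by rw [hw2]; exact fun h => hane' (sTr_injective h)),
          if_pos hw2] at hwU2
        rw [hwU2, evC _ ha] at hq2
        norm_num at hq2
      · rw [hwU, evC' _ ha] at hq1; norm_num at hq1
      · rw [hwU, map_mul, evB _ ha, evC' _ ha] at hq1; norm_num at hq1
      · rw [hwU, map_zero] at hq1; norm_num at hq1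
    · -- v = U'
      rw [hv4] at hv
      exact absurd hv (adj'_not_mem_minReps ha hp)
    · rw [hvU, map_zero, zero_mul] at hq1; norm_num at hq1
  · intro hcond
    by_cases hp : a ∈ P
    · exact ⟨1, one_mem_minReps P, sTr n ⟨a.1+1, ha⟩ * sTr n a,
        (adj'_mem_WPar_iff ha).2 ⟨hp, hcond hp⟩,
        by funext u; rw [sigma_one_left, one_mul]⟩
    · exact ⟨sTr n ⟨a.1+1, ha⟩ * sTr n a, adj'_mem_minReps ha hp, 1, one_mem _,
        by funext u; rw [sigma_one_left, mul_one]⟩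

lemma force (P Q : Set (Fin (n-1)))
    (h1 : ∀ (a : Fin (n-1)) (ha : a.1 + 1 < n - 1),
      (((⟨a.1+1, ha⟩ : Fin (n-1)) ∈ P → a ∈ P) ↔ ((⟨a.1+1, ha⟩ : Fin (n-1)) ∈ Q → a ∈ Q)))
    (h2 : ∀ (a : Fin (n-1)) (ha : a.1 + 1 < n - 1),
      ((a ∈ P → (⟨a.1+1, ha⟩ : Fin (n-1)) ∈ P) ↔ (a ∈ Q → (⟨a.1+1, ha⟩ : Fin (n-1)) ∈ Q)))
    (k : Fin (n-1)) (hkP : k ∈ P) (hkQ : k ∉ Q) : P = Set.univ ∧ Q = ∅ := by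
  have step_up : ∀ (a : Fin (n-1)) (ha : a.1 + 1 < n - 1), a ∈ P → a ∉ Q →
      ((⟨a.1+1, ha⟩ : Fin (n-1)) ∈ P ∧ (⟨a.1+1, ha⟩ : Fin (n-1)) ∉ Q) := by
    intro a ha hP hQ
    refine ⟨(h2 a ha).mpr (fun hq => absurd hq hQ) hP, fun hq' => hQ ((h1 a ha).mp (fun _ => hP) hq')⟩
  have step_down : ∀ (a : Fin (n-1)) (ha : a.1 + 1 < n - 1),
      (⟨a.1+1, ha⟩ : Fin (n-1)) ∈ P → (⟨a.1+1, ha⟩ : Fin (n-1)) ∉ Q → (a ∈ P ∧ a ∉ Q) := by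
    intro a ha hP hQ
    refine ⟨(h1 a ha).mpr (fun hq => absurd hq hQ) hP, fun ha' => hQ ((h2 a ha).mp (fun _ => hP) ha')⟩
  have up : ∀ (t : ℕ) (h : k.1 + t < n - 1), (⟨k.1 + t, h⟩ : Fin (n-1)) ∈ P ∧
      (⟨k.1 + t, h⟩ : Fin (n-1)) ∉ Q := by
    intro t
    induction t with
    | zero =>
      intro h
      have : (⟨k.1 + 0, h⟩ : Fin (n-1)) = k := Fin.ext (by simp)
      rw [this]; exact ⟨hkP, hkQ⟩
    | succ t ih =>
      intro h
      have hh : k.1 + t < n - 1 := by omega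
      obtain ⟨hp, hq⟩ := ih hh
      have hstep := step_up ⟨k.1 + t, hh⟩ (by omega) hp hq
      have heq : (⟨(⟨k.1 + t, hh⟩ : Fin (n-1)).1 + 1, by simp only; omega⟩ : Fin (n-1)) =
          ⟨k.1 + (t + 1), h⟩ := Fin.ext (by simp; omega)
      rwa [heq] at hstep
  have down : ∀ (t : ℕ), t ≤ k.1 → (⟨k.1 - t, by omega⟩ : Fin (n-1)) ∈ P ∧
      (⟨k.1 - t, by omega⟩ : Fin (n-1)) ∉ Q := by
    intro t
    induction t with
    | zero =>
      intro h
      have : (⟨k.1 - 0, by omega⟩ : Fin (n-1)) = k := Fin.ext (by simp)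
      rw [this]; exact ⟨hkP, hkQ⟩
    | succ t ih =>
      intro h
      obtain ⟨hp, hq⟩ := ih (by omega)
      have ha : (k.1 - (t+1)) + 1 < n - 1 := by omega
      have heq : (⟨(k.1 - (t+1)) + 1, ha⟩ : Fin (n-1)) = ⟨k.1 - t, by omega⟩ :=
        Fin.ext (by simp; omega)
      exact step_down ⟨k.1 - (t+1), by omega⟩ ha (heq ▸ hp) (heq ▸ hq)
  have all : ∀ m : Fin (n-1), m ∈ P ∧ m ∉ Q := by
    intro m
    rcases le_or_gt k.1 m.1 with h | h
    · have hlt : k.1 + (m.1 - k.1) < n - 1 := by have := m.isLt; omega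
      have := up (m.1 - k.1) hlt
      have heq : (⟨k.1 + (m.1 - k.1), hlt⟩ : Fin (n-1)) = m := Fin.ext (by simp; omega)
      rwa [heq] at this
    · have := down (k.1 - m.1) (by omega)
      have heq : (⟨k.1 - (k.1 - m.1), by omega⟩ : Fin (n-1)) = m := Fin.ext (by simp; omega)
      rwa [heq] at this
  exact ⟨Set.eq_univ_iff_forall.mpr (fun m => (all m).1),
    Set.eq_empty_iff_forall_notMem.mpr (fun m => (all m).2)⟩

end BA

/-- If `P, Q ⊆ {1, …, n-1}` are distinct subsets and it is not the case
that `{P, Q} = {∅, {1, …, n-1}}`, then `𝓑_P ≠ 𝓑_Q`. -/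
theorem parabolic_bases_distinct (n : ℕ) (hn : 2 ≤ n) (P Q : Set (Fin (n - 1)))
    (hPQ : P ≠ Q)
    (hexc : ¬ ((P = ∅ ∧ Q = Set.univ) ∨ (P = Set.univ ∧ Q = ∅))) :
    parabolicBasis n P ≠ parabolicBasis n Q := by
  intro hBB
  have h1 : ∀ (a : Fin (n-1)) (ha : a.1 + 1 < n - 1),
      (((⟨a.1+1, ha⟩ : Fin (n-1)) ∈ P → a ∈ P) ↔ ((⟨a.1+1, ha⟩ : Fin (n-1)) ∈ Q → a ∈ Q)) := by
    intro a ha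
    rw [← BA.mem_star_iff (P := P) ha, ← BA.mem_star_iff (P := Q) ha, hBB]
  have h2 : ∀ (a : Fin (n-1)) (ha : a.1 + 1 < n - 1),
      ((a ∈ P → (⟨a.1+1, ha⟩ : Fin (n-1)) ∈ P) ↔ (a ∈ Q → (⟨a.1+1, ha⟩ : Fin (n-1)) ∈ Q)) := by
    intro a ha
    rw [← BA.mem_bar_iff (P := P) ha, ← BA.mem_bar_iff (P := Q) ha, hBB]
  have hne : ∃ k : Fin (n-1), (k ∈ P ∧ k ∉ Q) ∨ (k ∈ Q ∧ k ∉ P) := by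
    by_contra hc
    push_neg at hc
    apply hPQ
    ext x
    have := hc x
    tauto
  obtain ⟨k, hk | hk⟩ := hne
  · obtain ⟨hPu, hQe⟩ := BA.force P Q h1 h2 k hk.1 hk.2
    exact hexc (Or.inr ⟨hPu, hQe⟩)
  · obtain ⟨hQu, hPe⟩ := BA.force Q P (fun a ha => (h1 a ha).symm) (fun a ha => (h2 a ha).symm)
      k hk.1 hk.2
    exact hexc (Or.inl ⟨hPe, hQu⟩)

end
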